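/- Let ξ ∈ ℝ with ξ ≠ 0, let Δt > 0, T > 0, and let g : [0, T] → ℝ be continuous. Define Y(t) = ∫₀^t e^{ξ(t − τ)} g(τ) dτ and let t_i = i Δt with t_i ≤ T for some integer i ≥ 1. If g is affine on the interval [t_{i−1}, t_i], i.e. g(τ) = ((t_i − τ) g(t_{i−1}) + (τ − t_{i−1}) g(t_i)) / Δt there, then Y(t_i) = κ₁ Y(t_{i−1}) + κ₂ g(t_{i−1}) + κ₃ g(t_i), where z = ξ Δt, κ₁ = e^z, κ₂ = (1/ξ)(e^z − 1 − (e^z − z − 1)/z) and κ₃ = (1/ξ)(e^z − z − 1)/z. -/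

import Mathlib

/-- One-step exact recurrence for the history term of the fast L1 scheme:
if `Y(t) = ∫₀ᵗ e^{ξ(t−τ)} g(τ) dτ`, `tᵢ = iΔt ≤ T` with `i ≥ 1`, and `g` is
affine on `[tᵢ₋₁, tᵢ]`, then `Y(tᵢ) = κ₁ Y(tᵢ₋₁) + κ₂ g(tᵢ₋₁) + κ₃ g(tᵢ)`,
where `z = ξΔt`, `κ₁ = eᶻ`, `κ₂ = (1/ξ)(eᶻ − 1 − (eᶻ − z − 1)/z)` and
`κ₃ = (1/ξ)(eᶻ − z − 1)/z`. -/
theorem fast_L1_history_recurrence (ξ : ℝ) (hξ : ξ ≠ 0) (Δt T : ℝ)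
    (hΔt : 0 < Δt) (hT : 0 < T)
    (g : ℝ → ℝ) (hg : ContinuousOn g (Set.Icc 0 T))
    (Y : ℝ → ℝ)
    (hY : ∀ t : ℝ, Y t = ∫ τ in (0:ℝ)..t, Real.exp (ξ * (t - τ)) * g τ)
    (i : ℕ) (hi : 1 ≤ i) (hti : (i : ℝ) * Δt ≤ T)
    (haff : ∀ τ ∈ Set.Icc (((i : ℝ) - 1) * Δt) ((i : ℝ) * Δt),
      g τ = (((i : ℝ) * Δt - τ) * g (((i : ℝ) - 1) * Δt) +
        (τ - ((i : ℝ) - 1) * Δt) * g ((i : ℝ) * Δt)) / Δt)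
    (z κ₁ κ₂ κ₃ : ℝ) (hz : z = ξ * Δt) (hκ₁ : κ₁ = Real.exp z)
    (hκ₂ : κ₂ = (1 / ξ) * (Real.exp z - 1 - (Real.exp z - z - 1) / z))
    (hκ₃ : κ₃ = (1 / ξ) * ((Real.exp z - z - 1) / z)) :
    Y ((i : ℝ) * Δt) =
      κ₁ * Y (((i : ℝ) - 1) * Δt) + κ₂ * g (((i : ℝ) - 1) * Δt) +
        κ₃ * g ((i : ℝ) * Δt) := by
  set a : ℝ := ((i : ℝ) - 1) * Δt with ha
  set b : ℝ := (i : ℝ) * Δt with hb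
  have hi1 : (1:ℝ) ≤ (i:ℝ) := by exact_mod_cast hi
  have ha0 : 0 ≤ a := by
    have : (0:ℝ) ≤ (i:ℝ) - 1 := by linarith
    exact mul_nonneg this hΔt.le
  have hab : a ≤ b := by
    have : a + Δt = b := by ring
    linarith
  have hbT : b ≤ T := hti
  have hba : b = a + Δt := by ring
  -- integrability
  have hcont : ∀ c : ℝ, ContinuousOn (fun τ => Real.exp (ξ * (c - τ)) * g τ) (Set.Icc 0 T) := by
    intro c
    exact ((Real.continuous_exp.comp (continuous_const.mul (continuous_const.sub continuous_id))).continuousOn).mul hg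
  have hI1 : IntervalIntegrable (fun τ => Real.exp (ξ * (b - τ)) * g τ) MeasureTheory.volume 0 a := by
    apply ContinuousOn.intervalIntegrable
    apply (hcont b).mono
    rw [Set.uIcc_of_le ha0]
    exact Set.Icc_subset_Icc le_rfl (le_trans hab hbT)
  have hI2 : IntervalIntegrable (fun τ => Real.exp (ξ * (b - τ)) * g τ) MeasureTheory.volume a b := by
    apply ContinuousOn.intervalIntegrable
    apply (hcont b).mono
    rw [Set.uIcc_of_le hab]
    exact Set.Icc_subset_Icc ha0 hbT
  have hsplit : (∫ τ in (0:ℝ)..a, Real.exp (ξ * (b - τ)) * g τ)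
      + (∫ τ in a..b, Real.exp (ξ * (b - τ)) * g τ)
      = ∫ τ in (0:ℝ)..b, Real.exp (ξ * (b - τ)) * g τ :=
    intervalIntegral.integral_add_adjacent_intervals hI1 hI2
  -- first piece
  have hfirst : (∫ τ in (0:ℝ)..a, Real.exp (ξ * (b - τ)) * g τ)
      = Real.exp z * Y a := by
    rw [hY a, ← intervalIntegral.integral_const_mul]
    apply intervalIntegral.integral_congr
    intro τ _
    simp only
    rw [← mul_assoc, ← Real.exp_add]
    congr 1
    rw [hz, hba]; ring
  -- second piece: explicit antiderivative
  set gA := g a with hgA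
  set gB := g b with hgB
  set c₁ : ℝ := -gA / (ξ * Δt) with hc₁
  set c₂ : ℝ := -gB / (ξ * Δt) with hc₂
  set c₃ : ℝ := (gA - gB) / (ξ^2 * Δt) with hc₃
  set F : ℝ → ℝ := fun τ => Real.exp (ξ * (b - τ)) * (c₁ * (b - τ) + c₂ * (τ - a) + c₃) with hF
  have hderiv : ∀ τ ∈ Set.uIcc a b, HasDerivAt F
      (Real.exp (ξ * (b - τ)) * ((b - τ) * gA + (τ - a) * gB) / Δt) τ := by
    intro τ _
    have h1 : HasDerivAt (fun τ : ℝ => Real.exp (ξ * (b - τ))) (Real.exp (ξ * (b - τ)) * (ξ * (-1))) τ := by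
      exact (((hasDerivAt_id τ).const_sub b).const_mul ξ).exp
    have h2 : HasDerivAt (fun τ : ℝ => c₁ * (b - τ) + c₂ * (τ - a) + c₃)
        (c₁ * (-1) + c₂ * 1) τ := by
      have := ((((hasDerivAt_id τ).const_sub b).const_mul c₁).add
        (((hasDerivAt_id τ).sub_const a).const_mul c₂)).add_const c₃
      simpa using this
    have := h1.mul h2
    refine HasDerivAt.congr_deriv this ?_
    rw [hc₁, hc₂, hc₃]
    field_simp
    ring
  have hI2' : IntervalIntegrable
      (fun τ => Real.exp (ξ * (b - τ)) * ((b - τ) * gA + (τ - a) * gB) / Δt)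
      MeasureTheory.volume a b := by
    apply ContinuousOn.intervalIntegrable
    apply Continuous.continuousOn
    apply Continuous.div_const
    exact (Real.continuous_exp.comp (continuous_const.mul (continuous_const.sub continuous_id))).mul
      (((continuous_const.sub continuous_id).mul continuous_const).add
        ((continuous_id.sub continuous_const).mul continuous_const))
  have hsecond : (∫ τ in a..b, Real.exp (ξ * (b - τ)) * g τ)
      = F b - F a := by
    rw [show (∫ τ in a..b, Real.exp (ξ * (b - τ)) * g τ)
        = ∫ τ in a..b, Real.exp (ξ * (b - τ)) * ((b - τ) * gA + (τ - a) * gB) / Δt from ?_]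
    · exact intervalIntegral.integral_eq_sub_of_hasDerivAt hderiv hI2'
    · apply intervalIntegral.integral_congr
      intro τ hτ
      rw [Set.uIcc_of_le hab] at hτ
      simp only
      rw [haff τ hτ]
      ring
  have hFval : F b - F a = κ₂ * gA + κ₃ * gB := by
    rw [hF]
    simp only
    have : b - a = Δt := by rw [hba]; ring
    rw [hκ₂, hκ₃, hz]
    rw [show ξ * (b - b) = 0 by ring, show ξ * (b - a) = ξ * Δt by rw [this]]
    rw [Real.exp_zero, hc₁, hc₂, hc₃, this]
    field_simp
    ring
  -- combine
  rw [hY b, ← hsplit, hfirst, hsecond, hFval, hκ₁]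
  ring
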